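/- Let a < b, α ∈ (0,1), and let f, g : [a,b] → ℝ be continuously differentiable functions whose left and right Riemann–Liouville derivatives of order α exist and are continuous on (a,b), with the products (ₐD_t^α f)·g and f·(ₜD_b^α g) integrable on [a,b]. If f(a) = f(b) = 0 (or g(a) = g(b) = 0), then ∫_a^b (ₐD_t^α f)(t)·g(t) dt = ∫_a^b f(t)·(ₜD_b^α g)(t) dt. -/

import Mathlib

open MeasureTheory intervalIntegral Set Function
open scoped NNReal ENNReal

private lemma rpow_cont {β : ℝ} (hβ : 0 ≤ β) : Continuous fun x : ℝ => x ^ β :=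
  continuous_iff_continuousAt.2 fun x => Real.continuousAt_rpow_const x β (Or.inr hβ)

private lemma rpow_holder {β : ℝ} (hβ0 : 0 ≤ β) (hβ1 : β ≤ 1) {x y : ℝ}
    (hx : 0 ≤ x) (hxy : x ≤ y) : y ^ β - x ^ β ≤ (y - x) ^ β := by
  have hd : 0 ≤ y - x := by linarith
  have h := NNReal.rpow_add_le_add_rpow (x.toNNReal) ((y - x).toNNReal) hβ0 hβ1
  have key : y ^ β ≤ x ^ β + (y - x) ^ β := by
    calc y ^ β = ((x.toNNReal + (y - x).toNNReal : ℝ≥0) : ℝ) ^ β := by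
          rw [NNReal.coe_add, Real.coe_toNNReal _ hx, Real.coe_toNNReal _ hd]
          norm_num
      _ = (((x.toNNReal + (y - x).toNNReal) ^ β : ℝ≥0) : ℝ) := by
          rw [← NNReal.coe_rpow]
      _ ≤ ((x.toNNReal ^ β + (y - x).toNNReal ^ β : ℝ≥0) : ℝ) := by exact_mod_cast h
      _ = x ^ β + (y - x) ^ β := by
          rw [NNReal.coe_add, NNReal.coe_rpow, NNReal.coe_rpow,
            Real.coe_toNNReal _ hx, Real.coe_toNNReal _ hd]
  linarith

private lemma holder_cont {a b β : ℝ} (hβ0 : 0 < β) (hβ1 : β ≤ 1) {h : ℝ → ℝ}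
    (hh : Continuous h) :
    ContinuousOn (fun t => ∫ u in a..t, (t - u) ^ β * h u) (Set.Icc a b) := by
  obtain ⟨C, hC⟩ := isCompact_Icc.exists_bound_of_continuousOn (hh.continuousOn (s := Set.Icc a b))
  set M := |C| + 1 with hMdef
  have hM0 : 0 < M := by positivity
  have hM : ∀ x ∈ Set.Icc a b, |h x| ≤ M := fun x hx =>
    le_trans (hC x hx) (by rw [hMdef]; cases abs_cases C <;> linarith)
  set N : ℝ → ℝ := fun t => ∫ u in a..t, (t - u) ^ β * h u with hNdef
  have kInt : ∀ t s₁ s₂ : ℝ, IntervalIntegrable (fun u => (t - u) ^ β * h u) volume s₁ s₂ :=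
    fun t s₁ s₂ => (((rpow_cont hβ0.le).comp (continuous_const.sub continuous_id)).mul hh).intervalIntegrable _ _
  have key : ∀ t₁ ∈ Set.Icc a b, ∀ t₂ ∈ Set.Icc a b, t₁ ≤ t₂ →
      |N t₂ - N t₁| ≤ 2 * M * (b - a) * (t₂ - t₁) ^ β := by
    intro t₁ ht₁ t₂ ht₂ h12
    have i1 : IntervalIntegrable (fun u => (t₂ - u) ^ β * h u) volume a t₁ := kInt _ _ _
    have i2 : IntervalIntegrable (fun u => (t₂ - u) ^ β * h u) volume t₁ t₂ := kInt _ _ _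
    have i3 : IntervalIntegrable (fun u => (t₁ - u) ^ β * h u) volume a t₁ := kInt _ _ _
    have split : N t₂ = (∫ u in a..t₁, (t₂ - u) ^ β * h u) + ∫ u in t₁..t₂, (t₂ - u) ^ β * h u :=
      (intervalIntegral.integral_add_adjacent_intervals i1 i2).symm
    have diff : N t₂ - N t₁ =
        (∫ u in a..t₁, ((t₂ - u) ^ β - (t₁ - u) ^ β) * h u) + ∫ u in t₁..t₂, (t₂ - u) ^ β * h u := by
      rw [split]
      have : (∫ u in a..t₁, ((t₂ - u) ^ β - (t₁ - u) ^ β) * h u)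
          = (∫ u in a..t₁, (t₂ - u) ^ β * h u) - ∫ u in a..t₁, (t₁ - u) ^ β * h u := by
        rw [← intervalIntegral.integral_sub i1 i3]
        congr 1; funext u; ring
      rw [this]; ring
    have bd1 : ‖∫ u in a..t₁, ((t₂ - u) ^ β - (t₁ - u) ^ β) * h u‖ ≤ M * (t₂ - t₁) ^ β * |t₁ - a| := by
      apply intervalIntegral.norm_integral_le_of_norm_le_const
      intro u hu
      rw [Set.uIoc_of_le ht₁.1] at hu
      have hu1 : 0 ≤ t₁ - u := by linarith [hu.2]
      have hu2 : t₁ - u ≤ t₂ - u := by linarith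
      have h1 : (t₂ - u) ^ β - (t₁ - u) ^ β ≤ (t₂ - t₁) ^ β := by
        have := rpow_holder hβ0.le hβ1 hu1 hu2
        simpa using this
      have h2 : 0 ≤ (t₂ - u) ^ β - (t₁ - u) ^ β :=
        sub_nonneg.2 (Real.rpow_le_rpow hu1 hu2 hβ0.le)
      have h3 : |h u| ≤ M := hM u ⟨hu.1.le, le_trans hu.2 ht₁.2⟩
      rw [Real.norm_eq_abs, abs_mul]
      calc |(t₂ - u) ^ β - (t₁ - u) ^ β| * |h u| ≤ (t₂ - t₁) ^ β * M := by
            apply mul_le_mul _ h3 (abs_nonneg _) (Real.rpow_nonneg (by linarith) _)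
            rw [abs_of_nonneg h2]; exact h1
        _ = M * (t₂ - t₁) ^ β := by ring
    have bd2 : ‖∫ u in t₁..t₂, (t₂ - u) ^ β * h u‖ ≤ M * (t₂ - t₁) ^ β * |t₂ - t₁| := by
      apply intervalIntegral.norm_integral_le_of_norm_le_const
      intro u hu
      rw [Set.uIoc_of_le h12] at hu
      have hu1 : 0 ≤ t₂ - u := by linarith [hu.2]
      have h1 : (t₂ - u) ^ β ≤ (t₂ - t₁) ^ β := Real.rpow_le_rpow hu1 (by linarith [hu.1]) hβ0.le
      have h3 : |h u| ≤ M := hM u ⟨le_trans ht₁.1 hu.1.le, le_trans hu.2 ht₂.2⟩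
      rw [Real.norm_eq_abs, abs_mul]
      calc |(t₂ - u) ^ β| * |h u| ≤ (t₂ - t₁) ^ β * M := by
            apply mul_le_mul _ h3 (abs_nonneg _) (Real.rpow_nonneg (by linarith [hu.1]) _)
            rw [abs_of_nonneg (Real.rpow_nonneg hu1 _)]; exact h1
        _ = M * (t₂ - t₁) ^ β := by ring
    have e1 : |t₁ - a| ≤ b - a := by rw [abs_of_nonneg (by linarith [ht₁.1])]; linarith [ht₁.2]
    have e2 : |t₂ - t₁| ≤ b - a := by rw [abs_of_nonneg (by linarith)]; linarith [ht₁.1, ht₂.2]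
    have hr0 : 0 ≤ (t₂ - t₁) ^ β := Real.rpow_nonneg (by linarith) _
    calc |N t₂ - N t₁| ≤ ‖∫ u in a..t₁, ((t₂ - u) ^ β - (t₁ - u) ^ β) * h u‖
          + ‖∫ u in t₁..t₂, (t₂ - u) ^ β * h u‖ := by
          rw [diff, Real.norm_eq_abs, Real.norm_eq_abs]; exact abs_add_le _ _
      _ ≤ M * (t₂ - t₁) ^ β * (b - a) + M * (t₂ - t₁) ^ β * (b - a) := by
          have := bd1; have := bd2
          have g1 : M * (t₂ - t₁) ^ β * |t₁ - a| ≤ M * (t₂ - t₁) ^ β * (b - a) := by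
            apply mul_le_mul_of_nonneg_left e1 (by positivity)
          have g2 : M * (t₂ - t₁) ^ β * |t₂ - t₁| ≤ M * (t₂ - t₁) ^ β * (b - a) := by
            apply mul_le_mul_of_nonneg_left e2 (by positivity)
          linarith
      _ = 2 * M * (b - a) * (t₂ - t₁) ^ β := by ring
  intro t₀ ht₀
  have hba : 0 ≤ b - a := by linarith [ht₀.1, ht₀.2]
  rw [ContinuousWithinAt, tendsto_iff_dist_tendsto_zero]
  apply squeeze_zero' (Filter.Eventually.of_forall (fun t => dist_nonneg))
  · filter_upwards [self_mem_nhdsWithin] with t ht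
    show dist (N t) (N t₀) ≤ 2 * M * (b - a) * |t - t₀| ^ β
    rw [Real.dist_eq]
    rcases le_total t t₀ with hle | hle
    · have habs : |t - t₀| = t₀ - t := by rw [abs_sub_comm]; exact abs_of_nonneg (by linarith)
      rw [habs, abs_sub_comm]
      exact key t ht t₀ ht₀ hle
    · have habs : |t - t₀| = t - t₀ := abs_of_nonneg (by linarith)
      rw [habs]
      exact key t₀ ht₀ t ht hle
  · have hcont : Continuous (fun t : ℝ => 2 * M * (b - a) * |t - t₀| ^ β) :=
      continuous_const.mul ((rpow_cont hβ0.le).comp ((continuous_id.sub continuous_const).abs))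
    have := (hcont.tendsto t₀).mono_left (nhdsWithin_le_nhds (s := Set.Icc a b))
    simpa [Real.zero_rpow hβ0.ne'] using this

private lemma ker_intble_left {α : ℝ} (hα : α < 1) (t s₁ s₂ : ℝ) :
    IntervalIntegrable (fun u : ℝ => (t - u) ^ (-α)) volume s₁ s₂ := by
  have h : IntervalIntegrable (fun x : ℝ => x ^ (-α)) volume (t - s₁) (t - s₂) :=
    intervalIntegral.intervalIntegrable_rpow' (by linarith)
  simpa using h.comp_sub_left t

private lemma ker_intble_right {α : ℝ} (hα : α < 1) (s t₁ t₂ : ℝ) :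
    IntervalIntegrable (fun u : ℝ => (u - s) ^ (-α)) volume t₁ t₂ := by
  have h : IntervalIntegrable (fun x : ℝ => x ^ (-α)) volume (t₁ - s) (t₂ - s) :=
    intervalIntegral.intervalIntegrable_rpow' (by linarith)
  simpa using h.comp_sub_right s

private lemma exists_global_deriv {a b : ℝ} (hab : a < b) {f : ℝ → ℝ}
    (hf : ContDiffOn ℝ 1 f (Set.Icc a b)) :
    ∃ φ : ℝ → ℝ, Continuous φ ∧ ∀ s ∈ Set.Ioo a b, HasDerivAt f (φ s) s := by
  have hu : UniqueDiffOn ℝ (Set.Icc a b) := uniqueDiffOn_Icc hab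
  have hdw : ContinuousOn (derivWithin f (Set.Icc a b)) (Set.Icc a b) :=
    hf.continuousOn_derivWithin hu le_rfl
  refine ⟨fun x => derivWithin f (Set.Icc a b) ((Set.projIcc a b hab.le x) : ℝ), ?_, ?_⟩
  · exact hdw.comp_continuous (continuous_subtype_val.comp continuous_projIcc)
      (fun x => (Set.projIcc a b hab.le x).2)
  · intro s hs
    have hmem : Set.Icc a b ∈ nhds s := Icc_mem_nhds hs.1 hs.2
    have hsIcc : s ∈ Set.Icc a b := ⟨hs.1.le, hs.2.le⟩
    have hdiff : DifferentiableAt ℝ f s :=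
      ((hf.differentiableOn one_ne_zero) s hsIcc).differentiableAt hmem
    have hproj : ((Set.projIcc a b hab.le s : Set.Icc a b) : ℝ) = s := by
      rw [Set.projIcc_of_mem hab.le hsIcc]
    show HasDerivAt f (derivWithin f (Set.Icc a b) ((Set.projIcc a b hab.le s : Set.Icc a b) : ℝ)) s
    rw [hproj, derivWithin_of_mem_nhds hmem]
    exact hdiff.hasDerivAt

private lemma lemA {α a t : ℝ} (hα0 : 0 < α) (hα1 : α < 1) (hat : a ≤ t)
    {f φ : ℝ → ℝ} (hfc : ContinuousOn f (Set.Icc a t))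
    (hder : ∀ s ∈ Set.Ioo a t, HasDerivAt f (φ s) s) (hφc : ContinuousOn φ (Set.Icc a t)) :
    ∫ s in a..t, (t - s) ^ (-α) * f s
      = f a * (t - a) ^ (1 - α) / (1 - α) + (1 - α)⁻¹ * ∫ s in a..t, (t - s) ^ (1 - α) * φ s := by
  set β : ℝ := 1 - α with hβ
  have hβ0 : 0 < β := by rw [hβ]; linarith
  set P : ℝ → ℝ := fun s => -((t - s) ^ β / β) * f s with hP
  have hPcont : ContinuousOn P (Set.Icc a t) :=
    ((((rpow_cont hβ0.le).comp (continuous_const.sub continuous_id)).div_const β).neg).continuousOn.mul hfc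
  have hPderiv : ∀ s ∈ Set.Ioo a t,
      HasDerivAt P ((t - s) ^ (-α) * f s + -((t - s) ^ β / β) * φ s) s := by
    intro s hs
    have h1 : HasDerivAt (fun s : ℝ => t - s) (-1) s := (hasDerivAt_id s).const_sub t
    have h2 : HasDerivAt (fun x : ℝ => x ^ β) (β * (t - s) ^ (β - 1)) (t - s) :=
      Real.hasDerivAt_rpow_const (Or.inl (by have := hs.2; intro hc; nlinarith [hs.2]))
    have h3 : HasDerivAt (fun s : ℝ => (t - s) ^ β) (β * (t - s) ^ (β - 1) * (-1)) s :=
      h2.comp s h1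
    have h4 : HasDerivAt (fun s : ℝ => -((t - s) ^ β / β)) (-(β * (t - s) ^ (β - 1) * (-1) / β)) s :=
      (h3.div_const β).neg
    have h5 := h4.mul (hder s hs)
    have e : -(β * (t - s) ^ (β - 1) * (-1) / β) = (t - s) ^ (-α) := by
      rw [show β - 1 = -α by rw [hβ]; ring]
      field_simp
    rw [e] at h5
    exact h5
  have int1 : IntervalIntegrable (fun s => (t - s) ^ (-α) * f s) volume a t := by
    apply (ker_intble_left hα1 t a t).mul_continuousOn
    rwa [Set.uIcc_of_le hat]
  have int2 : IntervalIntegrable (fun s => -((t - s) ^ β / β) * φ s) volume a t := by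
    apply ContinuousOn.intervalIntegrable
    rw [Set.uIcc_of_le hat]
    exact ((((rpow_cont hβ0.le).comp (continuous_const.sub continuous_id)).div_const β).neg).continuousOn.mul hφc
  have ftc := intervalIntegral.integral_eq_sub_of_hasDerivAt_of_le hat hPcont hPderiv (int1.add int2)
  rw [intervalIntegral.integral_add int1 int2] at ftc
  have hPa : P a = -((t - a) ^ β / β) * f a := rfl
  have hPt : P t = 0 := by
    simp only [hP, sub_self, Real.zero_rpow hβ0.ne', zero_div, neg_zero, zero_mul]
  rw [hPt, hPa] at ftc
  have e2 : (∫ s in a..t, -((t - s) ^ β / β) * φ s)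
      = -(β⁻¹ * ∫ s in a..t, (t - s) ^ β * φ s) := by
    rw [← intervalIntegral.integral_const_mul]
    rw [← intervalIntegral.integral_neg]
    congr 1; funext s; ring
  rw [e2] at ftc
  have : (∫ s in a..t, (t - s) ^ (-α) * f s)
      = f a * (t - a) ^ β / β + β⁻¹ * ∫ s in a..t, (t - s) ^ β * φ s := by
    have hβne : β ≠ 0 := hβ0.ne'
    field_simp at ftc ⊢
    linarith [ftc]
  simpa [hβ] using this

private lemma lemB {α s b : ℝ} (hα0 : 0 < α) (hα1 : α < 1) (hsb : s ≤ b)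
    {g γ : ℝ → ℝ} (hgc : ContinuousOn g (Set.Icc s b))
    (hder : ∀ u ∈ Set.Ioo s b, HasDerivAt g (γ u) u) (hγc : ContinuousOn γ (Set.Icc s b)) :
    ∫ t in s..b, (t - s) ^ (-α) * g t
      = g b * (b - s) ^ (1 - α) / (1 - α) - (1 - α)⁻¹ * ∫ t in s..b, (t - s) ^ (1 - α) * γ t := by
  set β : ℝ := 1 - α with hβ
  have hβ0 : 0 < β := by rw [hβ]; linarith
  set Q : ℝ → ℝ := fun t => (t - s) ^ β / β * g t with hQ
  have hQcont : ContinuousOn Q (Set.Icc s b) :=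
    (((rpow_cont hβ0.le).comp (continuous_id.sub continuous_const)).div_const β).continuousOn.mul hgc
  have hQderiv : ∀ t ∈ Set.Ioo s b,
      HasDerivAt Q ((t - s) ^ (-α) * g t + (t - s) ^ β / β * γ t) t := by
    intro t ht
    have h1 : HasDerivAt (fun t : ℝ => t - s) 1 t := by
      simpa using (hasDerivAt_id t).sub_const s
    have h2 : HasDerivAt (fun x : ℝ => x ^ β) (β * (t - s) ^ (β - 1)) (t - s) :=
      Real.hasDerivAt_rpow_const (Or.inl (by intro hc; nlinarith [ht.1]))
    have h3 : HasDerivAt (fun t : ℝ => (t - s) ^ β) (β * (t - s) ^ (β - 1) * 1) t := by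
      have h := h2.comp t h1; exact h
    have h4 := (h3.div_const β).mul (hder t ht)
    have e : β * (t - s) ^ (β - 1) * 1 / β = (t - s) ^ (-α) := by
      rw [show β - 1 = -α by rw [hβ]; ring]
      field_simp
    rw [e] at h4
    exact h4
  have int1 : IntervalIntegrable (fun t => (t - s) ^ (-α) * g t) volume s b := by
    apply (ker_intble_right hα1 s s b).mul_continuousOn
    rwa [Set.uIcc_of_le hsb]
  have int2 : IntervalIntegrable (fun t => (t - s) ^ β / β * γ t) volume s b := by
    apply ContinuousOn.intervalIntegrable
    rw [Set.uIcc_of_le hsb]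
    exact (((rpow_cont hβ0.le).comp (continuous_id.sub continuous_const)).div_const β).continuousOn.mul hγc
  have ftc := intervalIntegral.integral_eq_sub_of_hasDerivAt_of_le hsb hQcont hQderiv (int1.add int2)
  rw [intervalIntegral.integral_add int1 int2] at ftc
  have hQs : Q s = 0 := by
    simp only [hQ, sub_self, Real.zero_rpow hβ0.ne', zero_div, zero_mul]
  have hQb : Q b = (b - s) ^ β / β * g b := rfl
  rw [hQs, hQb] at ftc
  have e2 : (∫ t in s..b, (t - s) ^ β / β * γ t)
      = β⁻¹ * ∫ t in s..b, (t - s) ^ β * γ t := by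
    rw [← intervalIntegral.integral_const_mul]
    congr 1; funext t; ring
  rw [e2] at ftc
  have hβne : β ≠ 0 := hβ0.ne'
  have : (∫ t in s..b, (t - s) ^ (-α) * g t)
      = g b * (b - s) ^ β / β - β⁻¹ * ∫ t in s..b, (t - s) ^ β * γ t := by
    field_simp at ftc ⊢
    linarith [ftc]
  simpa [hβ] using this

private lemma fubini_tri {a b β : ℝ} (hβ0 : 0 < β) (hab : a ≤ b) {φ γ : ℝ → ℝ}
    (hφ : Continuous φ) (hγ : Continuous γ) :
    ∫ t in a..b, (∫ u in a..t, (t - u) ^ β * φ u) * γ t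
      = ∫ u in a..b, φ u * ∫ t in u..b, (t - u) ^ β * γ t := by
  obtain ⟨Cφ, hCφ⟩ := isCompact_Icc.exists_bound_of_continuousOn (hφ.continuousOn (s := Set.Icc a b))
  obtain ⟨Cγ, hCγ⟩ := isCompact_Icc.exists_bound_of_continuousOn (hγ.continuousOn (s := Set.Icc a b))
  set μ := volume.restrict (Set.Ioc a b) with hμ
  set K : ℝ → ℝ → ℝ := fun t u => if u < t then (t - u) ^ β * φ u * γ t else 0 with hK
  have measK : Measurable (uncurry K) := by
    have heq : uncurry K = Set.indicator {p : ℝ × ℝ | p.2 < p.1}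
        (fun p => (p.1 - p.2) ^ β * φ p.2 * γ p.1) := by
      ext ⟨t, u⟩
      simp only [uncurry_apply_pair, hK, Set.indicator_apply, Set.mem_setOf_eq]
    rw [heq]
    exact Measurable.indicator
      ((((rpow_cont hβ0.le).comp (continuous_fst.sub continuous_snd)).mul
        (hφ.comp continuous_snd)).mul (hγ.comp continuous_fst)).measurable
      (measurableSet_lt measurable_snd measurable_fst)
  set C : ℝ := (b - a) ^ β * ((|Cφ| + 1) * (|Cγ| + 1)) with hC
  have hbound : ∀ t ∈ Set.Ioc a b, ∀ u ∈ Set.Ioc a b, |K t u| ≤ C := by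
    intro t ht u hu
    by_cases hp : u < t
    · have h1 : (0:ℝ) ≤ t - u := by linarith
      have h2 : t - u ≤ b - a := by linarith [ht.2, hu.1]
      have e1 : (t - u) ^ β ≤ (b - a) ^ β := Real.rpow_le_rpow h1 h2 hβ0.le
      have e2 : |φ u| ≤ |Cφ| + 1 := by
        have := hCφ u ⟨hu.1.le, hu.2⟩
        rw [Real.norm_eq_abs] at this
        cases abs_cases Cφ <;> linarith
      have e3 : |γ t| ≤ |Cγ| + 1 := by
        have := hCγ t ⟨ht.1.le, ht.2⟩
        rw [Real.norm_eq_abs] at this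
        cases abs_cases Cγ <;> linarith
      have : |K t u| = (t - u) ^ β * |φ u| * |γ t| := by
        rw [hK]; simp only [hp, if_true]
        rw [abs_mul, abs_mul, abs_of_nonneg (Real.rpow_nonneg h1 β)]
      rw [this, hC]
      have h3 : (0:ℝ) ≤ (t - u) ^ β := Real.rpow_nonneg h1 β
      have h4 : (0:ℝ) ≤ (b - a) ^ β :=
        Real.rpow_nonneg (show (0:ℝ) ≤ b - a by linarith [ht.1, ht.2]) β
      calc (t - u) ^ β * |φ u| * |γ t| ≤ (b - a) ^ β * (|Cφ| + 1) * (|Cγ| + 1) :=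
            mul_le_mul (mul_le_mul e1 e2 (abs_nonneg _) h4) e3 (abs_nonneg _) (by positivity)
        _ = (b - a) ^ β * ((|Cφ| + 1) * (|Cγ| + 1)) := by ring
    · rw [hK]; simp only [hp, if_false]
      rw [hC, abs_zero]
      have h4 : (0:ℝ) ≤ (b - a) ^ β :=
        Real.rpow_nonneg (show (0:ℝ) ≤ b - a by linarith [ht.1, ht.2]) β
      positivity
  have finμ : IsFiniteMeasure μ := by
    constructor
    rw [hμ, Measure.restrict_apply_univ]
    exact measure_Ioc_lt_top
  have intK : Integrable (uncurry K) (μ.prod μ) := by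
    refine (integrable_const C).mono' measK.aestronglyMeasurable ?_
    rw [hμ, Measure.prod_restrict]
    refine (ae_restrict_iff' (measurableSet_Ioc.prod measurableSet_Ioc)).2
      (Filter.Eventually.of_forall ?_)
    rintro ⟨t, u⟩ ⟨ht, hu⟩
    simpa [uncurry] using hbound t ht u hu
  have swap : (∫ t, (∫ u, K t u ∂μ) ∂μ) = ∫ u, (∫ t, K t u ∂μ) ∂μ :=
    MeasureTheory.integral_integral_swap intK
  have L : ∀ t ∈ Set.Ioc a b, (∫ u, K t u ∂μ) = (∫ u in a..t, (t - u) ^ β * φ u) * γ t := by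
    intro t ht
    have h1 : (fun u => K t u) = Set.indicator (Set.Iio t) (fun u => (t - u) ^ β * φ u * γ t) := by
      funext u
      by_cases hp : u < t
      · rw [Set.indicator_of_mem (Set.mem_Iio.2 hp)]; simp [hK, hp]
      · rw [Set.indicator_of_notMem (fun hc => hp (Set.mem_Iio.1 hc))]; simp [hK, hp]
    rw [h1, MeasureTheory.integral_indicator measurableSet_Iio, hμ,
      Measure.restrict_restrict measurableSet_Iio]
    have h2 : Set.Iio t ∩ Set.Ioc a b = Set.Ioo a t := by
      ext u
      simp only [Set.mem_inter_iff, Set.mem_Iio, Set.mem_Ioc, Set.mem_Ioo]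
      constructor
      · rintro ⟨h3, h4, h5⟩; exact ⟨h4, h3⟩
      · rintro ⟨h4, h3⟩; exact ⟨h3, h4, le_trans h3.le ht.2⟩
    rw [h2, ← MeasureTheory.integral_Ioc_eq_integral_Ioo,
      ← intervalIntegral.integral_of_le ht.1.le,
      intervalIntegral.integral_mul_const]
  have R : ∀ u ∈ Set.Ioc a b, (∫ t, K t u ∂μ) = φ u * ∫ t in u..b, (t - u) ^ β * γ t := by
    intro u hu
    have h1 : (fun t => K t u) = Set.indicator (Set.Ioi u) (fun t => (t - u) ^ β * φ u * γ t) := by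
      funext t
      by_cases hp : u < t
      · rw [Set.indicator_of_mem (Set.mem_Ioi.2 hp)]; simp [hK, hp]
      · rw [Set.indicator_of_notMem (fun hc => hp (Set.mem_Ioi.1 hc))]; simp [hK, hp]
    rw [h1, MeasureTheory.integral_indicator measurableSet_Ioi, hμ,
      Measure.restrict_restrict measurableSet_Ioi]
    have h2 : Set.Ioi u ∩ Set.Ioc a b = Set.Ioc u b := by
      ext t
      simp only [Set.mem_inter_iff, Set.mem_Ioi, Set.mem_Ioc]
      constructor
      · rintro ⟨h3, _, h5⟩; exact ⟨h3, h5⟩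
      · rintro ⟨h3, h5⟩; exact ⟨h3, lt_trans hu.1 h3, h5⟩
    rw [h2, ← intervalIntegral.integral_of_le hu.2]
    rw [show (fun t => (t - u) ^ β * φ u * γ t) = (fun t => φ u * ((t - u) ^ β * γ t)) from
      funext fun t => by ring]
    rw [intervalIntegral.integral_const_mul]
  calc ∫ t in a..b, (∫ u in a..t, (t - u) ^ β * φ u) * γ t
      = ∫ t in Set.Ioc a b, (∫ u in a..t, (t - u) ^ β * φ u) * γ t :=
        intervalIntegral.integral_of_le hab
    _ = ∫ t, (∫ u, K t u ∂μ) ∂μ :=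
        (MeasureTheory.setIntegral_congr_fun measurableSet_Ioc (fun t ht => (L t ht).symm))
    _ = ∫ u, (∫ t, K t u ∂μ) ∂μ := swap
    _ = ∫ u in Set.Ioc a b, φ u * ∫ t in u..b, (t - u) ^ β * γ t :=
        (MeasureTheory.setIntegral_congr_fun measurableSet_Ioc (fun u hu => R u hu))
    _ = ∫ u in a..b, φ u * ∫ t in u..b, (t - u) ^ β * γ t :=
        (intervalIntegral.integral_of_le hab).symm

/-- Left Riemann–Liouville derivative of order `α ∈ (0,1)`:
`(ₐD_t^α x)(t) = (1/Γ(1−α)) (d/dt) ∫_a^t (t−s)^(−α) x(s) ds`. -/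
noncomputable def RLl (a α : ℝ) (x : ℝ → ℝ) (t : ℝ) : ℝ :=
  (Real.Gamma (1 - α))⁻¹ * deriv (fun τ => ∫ s in a..τ, (τ - s) ^ (-α) * x s) t

/-- Right Riemann–Liouville derivative of order `α ∈ (0,1)`:
`(ₜD_b^α x)(t) = −(1/Γ(1−α)) (d/dt) ∫_t^b (s−t)^(−α) x(s) ds`. -/
noncomputable def RLr (b α : ℝ) (x : ℝ → ℝ) (t : ℝ) : ℝ :=
  -((Real.Gamma (1 - α))⁻¹ * deriv (fun τ => ∫ s in τ..b, (s - τ) ^ (-α) * x s) t)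

/-- Existence of the left Riemann–Liouville derivative on a set. -/
def RLlExists (a α : ℝ) (x : ℝ → ℝ) (s : Set ℝ) : Prop :=
  ∀ t ∈ s, DifferentiableAt ℝ (fun τ => ∫ u in a..τ, (τ - u) ^ (-α) * x u) t

/-- Existence of the right Riemann–Liouville derivative on a set. -/
def RLrExists (b α : ℝ) (x : ℝ → ℝ) (s : Set ℝ) : Prop :=
  ∀ t ∈ s, DifferentiableAt ℝ (fun τ => ∫ u in τ..b, (u - τ) ^ (-α) * x u) t

theorem stmt4 {a b : ℝ} (hab : a < b) {α : ℝ} (hα : α ∈ Set.Ioo (0 : ℝ) 1)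
    (f g : ℝ → ℝ)
    (hf : ContDiffOn ℝ 1 f (Set.Icc a b)) (hg : ContDiffOn ℝ 1 g (Set.Icc a b))
    (hfl : RLlExists a α f (Set.Ioo a b)) (hfr : RLrExists b α f (Set.Ioo a b))
    (hgl : RLlExists a α g (Set.Ioo a b)) (hgr : RLrExists b α g (Set.Ioo a b))
    (hflc : ContinuousOn (RLl a α f) (Set.Ioo a b))
    (hfrc : ContinuousOn (RLr b α f) (Set.Ioo a b))
    (hglc : ContinuousOn (RLl a α g) (Set.Ioo a b))
    (hgrc : ContinuousOn (RLr b α g) (Set.Ioo a b))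
    (hint1 : IntervalIntegrable (fun t => RLl a α f t * g t) volume a b)
    (hint2 : IntervalIntegrable (fun t => f t * RLr b α g t) volume a b)
    (hbc : (f a = 0 ∧ f b = 0) ∨ (g a = 0 ∧ g b = 0)) :
    ∫ t in a..b, RLl a α f t * g t = ∫ t in a..b, f t * RLr b α g t := by
  obtain ⟨hα0, hα1⟩ := hα
  have hβ0 : (0:ℝ) < 1 - α := by linarith
  have hβ1 : (1:ℝ) - α ≤ 1 := by linarith
  have hΓ : 0 < Real.Gamma (1 - α) := Real.Gamma_pos_of_pos hβ0
  have hΓne : Real.Gamma (1 - α) ≠ 0 := hΓ.ne'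
  obtain ⟨φ, hφc, hφd⟩ := exists_global_deriv hab hf
  obtain ⟨γ, hγc, hγd⟩ := exists_global_deriv hab hg
  set F : ℝ → ℝ := fun τ => ∫ s in a..τ, (τ - s) ^ (-α) * f s with hF
  set G : ℝ → ℝ := fun τ => ∫ s in τ..b, (s - τ) ^ (-α) * g s with hG
  set N : ℝ → ℝ := fun t => ∫ u in a..t, (t - u) ^ (1 - α) * φ u with hNd
  set Mq : ℝ → ℝ := fun s => ∫ t in s..b, (t - s) ^ (1 - α) * γ t with hMd
  have hfC : ContinuousOn f (Set.Icc a b) := hf.continuousOn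
  have hgC : ContinuousOn g (Set.Icc a b) := hg.continuousOn
  have A : ∀ t ∈ Set.Icc a b,
      F t = f a * (t - a) ^ (1 - α) / (1 - α) + (1 - α)⁻¹ * N t := by
    intro t ht
    exact lemA hα0 hα1 ht.1 (hfC.mono (Set.Icc_subset_Icc_right ht.2))
      (fun s hs => hφd s ⟨hs.1, lt_of_lt_of_le hs.2 ht.2⟩) hφc.continuousOn
  have B : ∀ s ∈ Set.Icc a b,
      G s = g b * (b - s) ^ (1 - α) / (1 - α) - (1 - α)⁻¹ * Mq s := by
    intro s hs
    exact lemB hα0 hα1 hs.2 (hgC.mono (Set.Icc_subset_Icc_left hs.1))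
      (fun u hu => hγd u ⟨lt_of_le_of_lt hs.1 hu.1, hu.2⟩) hγc.continuousOn
  have contN : ContinuousOn N (Set.Icc a b) := holder_cont hβ0 hβ1 hφc
  have contMq : ContinuousOn Mq (Set.Icc a b) := by
    have h1 : ContinuousOn (fun t => ∫ u in a..t, (t - u) ^ (1 - α) * γ (a + b - u))
        (Set.Icc a b) := holder_cont hβ0 hβ1 (hγc.comp (continuous_const.sub continuous_id))
    have h2 : ContinuousOn (fun s : ℝ => a + b - s) (Set.Icc a b) :=
      (continuous_const.sub continuous_id).continuousOn
    have h3 := h1.comp h2 (fun s hs => Set.mem_Icc.2 ⟨by linarith [hs.2], by linarith [hs.1]⟩)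
    refine ContinuousOn.congr h3 ?_
    intro s hs
    show Mq s = ∫ u in a..(a + b - s), ((a + b - s) - u) ^ (1 - α) * γ (a + b - u)
    have hc := intervalIntegral.integral_comp_sub_left (a := a) (b := a + b - s)
      (fun y => (y - s) ^ (1 - α) * γ y) (a + b)
    rw [show a + b - (a + b - s) = s by ring, show a + b - a = b by ring] at hc
    rw [hMd]
    show (∫ t in s..b, (t - s) ^ (1 - α) * γ t)
        = ∫ u in a..(a + b - s), ((a + b - s) - u) ^ (1 - α) * γ (a + b - u)
    rw [← hc]
    apply intervalIntegral.integral_congr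
    intro u hu
    show (a + b - u - s) ^ (1 - α) * γ (a + b - u) = (a + b - s - u) ^ (1 - α) * γ (a + b - u)
    rw [show a + b - u - s = a + b - s - u by ring]
  have contF : ContinuousOn F (Set.Icc a b) := by
    have hc : ContinuousOn
        (fun t => f a * (t - a) ^ (1 - α) / (1 - α) + (1 - α)⁻¹ * N t) (Set.Icc a b) := by
      apply ContinuousOn.add
      · exact ((continuous_const.mul
          ((rpow_cont hβ0.le).comp (continuous_id.sub continuous_const))).div_const
            _).continuousOn
      · exact continuousOn_const.mul contN
    exact hc.congr (fun t ht => A t ht)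
  have contG : ContinuousOn G (Set.Icc a b) := by
    have hc : ContinuousOn
        (fun s => g b * (b - s) ^ (1 - α) / (1 - α) - (1 - α)⁻¹ * Mq s) (Set.Icc a b) := by
      apply ContinuousOn.sub
      · exact ((continuous_const.mul
          ((rpow_cont hβ0.le).comp (continuous_const.sub continuous_id))).div_const
            _).continuousOn
      · exact continuousOn_const.mul contMq
    exact hc.congr (fun s hs => B s hs)
  have hRLl : ∀ t, RLl a α f t = (Real.Gamma (1 - α))⁻¹ * deriv F t := fun t => rfl
  have hRLr : ∀ t, RLr b α g t = -((Real.Gamma (1 - α))⁻¹ * deriv G t) := fun t => rfl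
  have IF1 : IntervalIntegrable (fun t => deriv F t * g t) volume a b := by
    have he : (fun t => deriv F t * g t)
        = fun t => Real.Gamma (1 - α) * (RLl a α f t * g t) := by
      funext t
      rw [hRLl t]
      field_simp
    rw [he]
    exact hint1.const_mul _
  have IF2 : IntervalIntegrable (fun t => f t * deriv G t) volume a b := by
    have he : (fun t => f t * deriv G t)
        = fun t => (-Real.Gamma (1 - α)) * (f t * RLr b α g t) := by
      funext t
      rw [hRLr t]
      field_simp
    rw [he]
    exact hint2.const_mul _
  have IF3 : IntervalIntegrable (fun t => F t * γ t) volume a b := by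
    apply ContinuousOn.intervalIntegrable
    rw [Set.uIcc_of_le hab.le]
    exact contF.mul hγc.continuousOn
  have IF4 : IntervalIntegrable (fun t => φ t * G t) volume a b := by
    apply ContinuousOn.intervalIntegrable
    rw [Set.uIcc_of_le hab.le]
    exact hφc.continuousOn.mul contG
  have hFd : ∀ t ∈ Set.Ioo a b, HasDerivAt F (deriv F t) t := fun t ht => (hfl t ht).hasDerivAt
  have hGd : ∀ t ∈ Set.Ioo a b, HasDerivAt G (deriv G t) t := fun t ht => (hgr t ht).hasDerivAt
  have IBP1 : (∫ t in a..b, (deriv F t * g t + F t * γ t)) = F b * g b - F a * g a :=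
    intervalIntegral.integral_eq_sub_of_hasDerivAt_of_le hab.le (contF.mul hgC)
      (fun t ht => (hFd t ht).mul (hγd t ht)) (IF1.add IF3)
  have IBP2 : (∫ t in a..b, (φ t * G t + f t * deriv G t)) = f b * G b - f a * G a :=
    intervalIntegral.integral_eq_sub_of_hasDerivAt_of_le hab.le (hfC.mul contG)
      (fun t ht => (hφd t ht).mul (hGd t ht)) (IF4.add IF2)
  have Fa0 : F a = 0 := intervalIntegral.integral_same
  have Gb0 : G b = 0 := intervalIntegral.integral_same
  rw [intervalIntegral.integral_add IF1 IF3, Fa0, zero_mul, sub_zero] at IBP1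
  rw [intervalIntegral.integral_add IF4 IF2, Gb0, mul_zero, zero_sub] at IBP2
  have FUB : (∫ t in a..b, N t * γ t) = ∫ u in a..b, φ u * Mq u :=
    fubini_tri hβ0 hab.le hφc hγc
  have X1 : (∫ t in a..b, F t * γ t)
      = ∫ t in a..b, ((f a / (1 - α)) * ((t - a) ^ (1 - α) * γ t) + (1 - α)⁻¹ * (N t * γ t)) := by
    apply intervalIntegral.integral_congr
    intro t ht
    rw [Set.uIcc_of_le hab.le] at ht
    show F t * γ t = _
    rw [A t ht]
    ring
  have I5 : IntervalIntegrable (fun t => (f a / (1 - α)) * ((t - a) ^ (1 - α) * γ t)) volume a b :=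
    (continuous_const.mul
      (((rpow_cont hβ0.le).comp (continuous_id.sub continuous_const)).mul
        hγc)).intervalIntegrable _ _
  have I6 : IntervalIntegrable (fun t => (1 - α)⁻¹ * (N t * γ t)) volume a b := by
    apply ContinuousOn.intervalIntegrable
    rw [Set.uIcc_of_le hab.le]
    exact continuousOn_const.mul (contN.mul hγc.continuousOn)
  have X2 : (∫ t in a..b, F t * γ t)
      = (f a / (1 - α)) * Mq a + (1 - α)⁻¹ * ∫ t in a..b, N t * γ t := by
    rw [X1, intervalIntegral.integral_add I5 I6,
      intervalIntegral.integral_const_mul, intervalIntegral.integral_const_mul]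
  have Y1 : (∫ u in a..b, φ u * Mq u)
      = ∫ u in a..b, (g b * ((b - u) ^ (1 - α) * φ u) + (-(1 - α)) * (φ u * G u)) := by
    apply intervalIntegral.integral_congr
    intro u hu
    rw [Set.uIcc_of_le hab.le] at hu
    have hB := B u hu
    have hMu : Mq u = g b * (b - u) ^ (1 - α) - (1 - α) * G u := by
      rw [hB]
      field_simp
      ring
    show φ u * Mq u = _
    rw [hMu]
    ring
  have I7 : IntervalIntegrable (fun u => g b * ((b - u) ^ (1 - α) * φ u)) volume a b :=
    (continuous_const.mul
      (((rpow_cont hβ0.le).comp (continuous_const.sub continuous_id)).mul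
        hφc)).intervalIntegrable _ _
  have I8 : IntervalIntegrable (fun u => (-(1 - α)) * (φ u * G u)) volume a b := by
    apply ContinuousOn.intervalIntegrable
    rw [Set.uIcc_of_le hab.le]
    exact continuousOn_const.mul (hφc.continuousOn.mul contG)
  have Y2 : (∫ u in a..b, φ u * Mq u)
      = g b * N b + (-(1 - α)) * (∫ u in a..b, φ u * G u) := by
    rw [Y1, intervalIntegral.integral_add I7 I8,
      intervalIntegral.integral_const_mul, intervalIntegral.integral_const_mul]
  have eNb : N b = (1 - α) * F b - f a * (b - a) ^ (1 - α) := by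
    have hA := A b ⟨hab.le, le_refl b⟩
    rw [hA]
    field_simp
    ring
  have eMqa : Mq a = g b * (b - a) ^ (1 - α) - (1 - α) * G a := by
    have hB := B a ⟨le_refl a, hab.le⟩
    rw [hB]
    field_simp
    ring
  have KEY : (∫ t in a..b, F t * γ t)
      = F b * g b - f a * G a - ∫ u in a..b, φ u * G u := by
    rw [X2, eMqa, FUB, Y2, eNb]
    field_simp
    ring
  have P1 : (∫ t in a..b, RLl a α f t * g t)
      = (Real.Gamma (1 - α))⁻¹ * ∫ t in a..b, deriv F t * g t := by
    rw [← intervalIntegral.integral_const_mul]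
    apply intervalIntegral.integral_congr
    intro t ht
    show RLl a α f t * g t = _
    rw [hRLl t]
    ring
  have P2 : (∫ t in a..b, f t * RLr b α g t)
      = -(Real.Gamma (1 - α))⁻¹ * ∫ t in a..b, f t * deriv G t := by
    rw [← intervalIntegral.integral_const_mul]
    apply intervalIntegral.integral_congr
    intro t ht
    show f t * RLr b α g t = _
    rw [hRLr t]
    ring
  have S1 : (∫ t in a..b, deriv F t * g t) = F b * g b - ∫ t in a..b, F t * γ t := by
    linarith [IBP1]
  have S2 : (∫ t in a..b, f t * deriv G t)
      = -(f a * G a) - ∫ u in a..b, φ u * G u := by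
    linarith [IBP2]
  rw [P1, P2, S1, KEY, S2]
  ring
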